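/- Let G be a finite simple graph, let S₁, …, S_k ⊆ V be anchor groups, let v* ∈ V, and let val* be the reduction value function. Suppose the set F of feasible subgraphs of G is nonempty. Then the maximum of Φ(H) over H ∈ F (with Φ computed with respect to val*) equals 1 divided by the minimum of |V(H)| + |E(H)| over H ∈ F; that is, OPT_OISR = 1 / OPT_GST for the constructed instance. -/
import Mathlib


open scoped BigOperators

/-- The information-density objective Φ of a subgraph `H`, given a value
function on vertices and on edges. -/
noncomputable def Phi {V : Type*} {G : SimpleGraph V} (H : G.Subgraph)
    (valV : V → ℝ) (valE : Sym2 V → ℝ) : ℝ :=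
  ((∑ᶠ v ∈ H.verts, valV v) + ∑ᶠ e ∈ H.edgeSet, valE e) /
    ((H.verts.ncard + H.edgeSet.ncard : ℕ) : ℝ)

/-- The reduction value function on vertices: `1` at `vstar`, `0` elsewhere. -/
noncomputable def redVal {V : Type*} [DecidableEq V] (vstar : V) : V → ℝ :=
  fun v => if v = vstar then 1 else 0


lemma phi_eq {V : Type*} [Fintype V] [DecidableEq V] {G : SimpleGraph V}
    (H : G.Subgraph) (vstar : V) (hv : vstar ∈ H.verts) :
    Phi H (redVal vstar) (fun _ => 0) =
      1 / ((H.verts.ncard + H.edgeSet.ncard : ℕ) : ℝ) := by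
  unfold Phi redVal
  congr 1
  have hfin : H.verts.Finite := Set.toFinite _
  rw [← hfin.coe_toFinset, finsum_mem_coe_finset,
    Finset.sum_ite_eq' hfin.toFinset vstar (fun _ => (1:ℝ))]
  simp [hfin.mem_toFinset.mpr hv]

theorem stmt_6 {V : Type*} [Fintype V] [DecidableEq V] (G : SimpleGraph V)
    (k : ℕ) (S : Fin k → Set V) (vstar : V)
    (F : Set G.Subgraph)
    (hF : F = {H : G.Subgraph | H.Connected ∧ vstar ∈ H.verts ∧
        ∀ i : Fin k, (H.verts ∩ S i).Nonempty})
    (hne : F.Nonempty) :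
    ∃ (M : ℝ) (m : ℕ),
      IsGreatest ((fun H : G.Subgraph => Phi H (redVal vstar) (fun _ => 0)) '' F) M ∧
      IsLeast ((fun H : G.Subgraph => H.verts.ncard + H.edgeSet.ncard) '' F) m ∧
      M = 1 / (m : ℝ) := by
  set s : G.Subgraph → ℕ := fun H => H.verts.ncard + H.edgeSet.ncard with hs
  have himg : (s '' F).Nonempty := hne.image s
  set m := sInf (s '' F) with hm
  have hmem : m ∈ s '' F := Nat.sInf_mem himg
  have hleast : IsLeast (s '' F) m := ⟨hmem, fun n hn => Nat.sInf_le hn⟩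
  -- vstar ∈ H.verts for H ∈ F
  have hvst : ∀ H ∈ F, vstar ∈ H.verts := by
    intro H hH; rw [hF] at hH; exact hH.2.1
  have hsize : ∀ H ∈ F, 1 ≤ s H := by
    intro H hH
    have : 0 < H.verts.ncard := (Set.ncard_pos (Set.toFinite _)).mpr ⟨vstar, hvst H hH⟩
    simp only [hs]; omega
  have hm1 : 1 ≤ m := by
    obtain ⟨H, hH, hHm⟩ := hmem
    exact hHm ▸ hsize H hH
  refine ⟨1 / (m : ℝ), m, ?_, hleast, rfl⟩
  constructor
  · obtain ⟨H, hH, hHm⟩ := hmem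
    refine ⟨H, hH, ?_⟩
    show Phi H (redVal vstar) (fun _ => 0) = 1 / (m:ℝ)
    rw [phi_eq H vstar (hvst H hH)]
    exact_mod_cast congrArg (fun n : ℕ => 1 / (n:ℝ)) hHm
  · rintro x ⟨H, hH, rfl⟩
    show Phi H (redVal vstar) (fun _ => 0) ≤ 1 / (m:ℝ)
    rw [phi_eq H vstar (hvst H hH)]
    have h1 : (0:ℝ) < m := by exact_mod_cast hm1
    have h2 : (m : ℝ) ≤ s H := by exact_mod_cast hleast.2 ⟨H, hH, rfl⟩
    exact one_div_le_one_div_of_le h1 h2
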